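/- arXiv:2001.01254 — 4 statements merged into one kernel-verified Lean document; each statement's English description precedes it below -/
import Mathlib

section
/- Let A be a complete abelian category with a generator. Then every object of A embeds in an injective object if and only if A has an injective cogenerator. -/
open CategoryTheory CategoryTheory.Limits

universe u v

/-- In a complete abelian category with a generator, every object embeds in an injective
object if and only if the category has an injective cogenerator. -/
theorem embeds_in_injective_iff_injective_cogenerator
    {A : Type u} [Category.{v} A] [Abelian A] [HasLimits A]
    (G : A) (hG : ∀ ⦃X Y : A⦄ (f : X ⟶ Y), f ≠ 0 → ∃ g : G ⟶ X, g ≫ f ≠ 0) :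
    (∀ X : A, ∃ (I : A) (i : X ⟶ I), Injective I ∧ Mono i) ↔
      (∃ C : A, Injective C ∧ ∀ ⦃X Y : A⦄ (f : X ⟶ Y), f ≠ 0 → ∃ h : Y ⟶ C, f ≫ h ≠ 0) := by
  constructor
  · intro hemb
    haveI : EnoughInjectives A :=
      ⟨fun X => ⟨let h := (hemb X).choose_spec
                 ⟨(hemb X).choose, h.choose_spec.1, h.choose, h.choose_spec.2⟩⟩⟩
    have hsep : IsSeparator G := by
      rw [Preadditive.isSeparator_iff]
      intro X Y f hf
      by_contra h
      obtain ⟨g, hg⟩ := hG f h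
      exact hg (hf g)
    obtain ⟨C, hC₁, hC₂⟩ := Abelian.has_injective_coseparator G hsep
    refine ⟨C, hC₁, fun X Y f hf => ?_⟩
    by_contra h
    push_neg at h
    exact hf ((Preadditive.isCoseparator_iff C).1 hC₂ f h)
  · rintro ⟨C, hC₁, hC₂⟩ X
    refine ⟨∏ᶜ fun _ : X ⟶ C => C, Pi.lift fun f => f, inferInstance, ?_⟩
    rw [Preadditive.mono_iff_cancel_zero]
    intro Z g hg
    by_contra h
    obtain ⟨f, hf⟩ := hC₂ g h
    apply hf
    have := hg =≫ Pi.π (fun _ : X ⟶ C => C) f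
    simpa using this
end

section
/- Let M be a small additive category and let E be an injective object in the category of additive functors from M to abelian groups. Then for every sequence X⁰ → X¹ → ⋯ → Xⁿ → X^{n+1} in M such that 0 → Hom(X^{n+1},−) → Hom(Xⁿ,−) → ⋯ → Hom(X¹,−) → Hom(X⁰,−) is exact in the functor category, the sequence E(X⁰) → E(X¹) → ⋯ → E(Xⁿ) → E(X^{n+1}) → 0 is an exact sequence of abelian groups. -/
open CategoryTheory CategoryTheory.Limits

universe u

variable {M : Type u} [SmallCategory M] [Preadditive M]

/-- The category `(M, G)` of additive functors from `M` to abelian groups, as a full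
subcategory of the functor category `M ⥤ AddCommGrp`. -/
abbrev AdditiveFunctorCat (M : Type u) [SmallCategory M] [Preadditive M] :=
  ObjectProperty.FullSubcategory (fun F : M ⥤ AddCommGrpCat.{u} => F.Additive)

namespace NExactAux

variable (M) in
/-- The representable functor `Hom(A, -)` as an object of the additive functor category. -/
def coyo (A : M) : AdditiveFunctorCat M :=
  ⟨preadditiveCoyoneda.obj (Opposite.op A), inferInstance⟩

/-- Precomposition `Hom(B,-) ⟶ Hom(A,-)` induced by `f : A ⟶ B`. -/
def coyoMap {A B : M} (f : A ⟶ B) : coyo M B ⟶ coyo M A :=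
  ObjectProperty.homMk (preadditiveCoyoneda.map f.op)

@[simp] lemma coyoMap_app {A B : M} (f : A ⟶ B) (Y : M) (g : B ⟶ Y) :
    (coyoMap f).hom.app Y g = f ≫ g := rfl

/-- Evaluation natural transformation `Hom(A,-) ⟶ E` attached to `e : E(A)`. -/
def evalHom (E : AdditiveFunctorCat M) {A : M} (e : E.obj.obj A) : coyo M A ⟶ E where
  hom.app Y := AddCommGrpCat.ofHom
    { toFun := fun g => E.obj.map g e
      map_zero' := by
        haveI := E.property
        show (E.obj.map 0) e = 0
        rw [Functor.map_zero]; rfl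
      map_add' := fun (g g' : A ⟶ Y) => by
        haveI := E.property
        show (E.obj.map (g + g')) e = _
        rw [Functor.map_add]; rfl }
  hom.naturality Y Z f := by
    ext (g : A ⟶ Y)
    show E.obj.map (g ≫ f) e = E.obj.map f (E.obj.map g e)
    rw [E.obj.map_comp]; rfl

@[simp] lemma evalHom_app (E : AdditiveFunctorCat M) {A : M} (e : E.obj.obj A) (Y : M)
    (g : A ⟶ Y) : (evalHom E e).hom.app Y g = E.obj.map g e := rfl


section Exactness

variable (E : AdditiveFunctorCat M) {A B C : M} (f : A ⟶ B) (g : B ⟶ C)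

/-- Precomposition with `g` as an additive map `Hom(C,Y) → Hom(B,Y)`. -/
def precompHom (Y : M) : (C ⟶ Y) →+ (B ⟶ Y) :=
  AddMonoidHom.mk' (fun c => g ≫ c) (fun c c' => Preadditive.comp_add _ _ _ _ _ _)

/-- The quotient functor `Y ↦ Hom(B,Y) / (g ≫ Hom(C,Y))`. -/
def Q : M ⥤ AddCommGrpCat.{u} where
  obj Y := AddCommGrpCat.of ((B ⟶ Y) ⧸ (precompHom g Y).range)
  map {Y Z} φ := AddCommGrpCat.ofHom <|
    QuotientAddGroup.map _ _ (AddMonoidHom.mk' (fun b => b ≫ φ)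
      (fun b b' => Preadditive.add_comp _ _ _ _ _ _)) (by
        rintro x ⟨c, rfl⟩
        exact ⟨c ≫ φ, (Category.assoc _ _ _).symm⟩)
  map_id Y := by
    refine AddCommGrpCat.ext fun x => ?_
    induction x using QuotientAddGroup.induction_on with
    | H b => show QuotientAddGroup.mk (b ≫ 𝟙 Y) = _; rw [Category.comp_id]; rfl
  map_comp {Y Z W} φ φ' := by
    refine AddCommGrpCat.ext fun x => ?_
    induction x using QuotientAddGroup.induction_on with
    | H b =>
      show QuotientAddGroup.mk (b ≫ (φ ≫ φ')) = QuotientAddGroup.mk ((b ≫ φ) ≫ φ')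
      rw [Category.assoc]

instance : (Q (M := M) g).Additive where
  map_add {Y Z φ φ'} := by
    refine AddCommGrpCat.ext fun x => ?_
    induction x using QuotientAddGroup.induction_on with
    | H b =>
      show QuotientAddGroup.mk (b ≫ (φ + φ')) =
        QuotientAddGroup.mk (b ≫ φ) + QuotientAddGroup.mk (b ≫ φ')
      rw [Preadditive.comp_add]; rfl

/-- The quotient functor as an object of the additive functor category. -/
def QE : AdditiveFunctorCat M := ⟨Q g, inferInstance⟩

/-- The induced map from the quotient into `Hom(A,-)`, defined when `f ≫ g = 0`. -/
def iot (hz : f ≫ g = 0) : QE (M := M) g ⟶ coyo M A where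
  hom.app Y := AddCommGrpCat.ofHom <| QuotientAddGroup.lift _ (precompHom f Y) (by
    rintro x ⟨c, rfl⟩
    show f ≫ g ≫ c = 0
    rw [← Category.assoc, hz, Limits.zero_comp])
  hom.naturality Y Z φ := by
    refine AddCommGrpCat.ext fun x => ?_
    induction x using QuotientAddGroup.induction_on with
    | H b =>
      show f ≫ (b ≫ φ) = (f ≫ b) ≫ φ
      rw [Category.assoc]

/-- The map from the quotient to `E` induced by `e : E(B)` killed by `E(g)`. -/
def psibar (e : E.obj.obj B) (he : E.obj.map g e = 0) : QE (M := M) g ⟶ E where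
  hom.app Y := AddCommGrpCat.ofHom <| QuotientAddGroup.lift _ ((evalHom E e).hom.app Y).hom (by
    rintro x ⟨c, rfl⟩
    show E.obj.map (g ≫ c) e = 0
    rw [E.obj.map_comp]
    show E.obj.map c (E.obj.map g e) = 0
    rw [he, map_zero])
  hom.naturality Y Z φ := by
    refine AddCommGrpCat.ext fun x => ?_
    induction x using QuotientAddGroup.induction_on with
    | H b =>
      show E.obj.map (b ≫ φ) e = E.obj.map φ (E.obj.map b e)
      rw [E.obj.map_comp]; rfl

end Exactness

/-- If precomposition with `f` is injective on all hom-sets, then `E(f)` is surjective for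
injective `E`. -/
lemma surj (E : AdditiveFunctorCat M) (hE : Injective E) {A B : M} (f : A ⟶ B)
    (hf : ∀ Y : M, Function.Injective (fun g : B ⟶ Y => f ≫ g)) :
    Function.Surjective (E.obj.map f) := by
  haveI : Mono (coyoMap (M := M) f) := by
    constructor
    intro Z α β w
    refine InducedCategory.hom_ext (NatTrans.ext (funext fun Y => AddCommGrpCat.ext fun y => ?_))
    apply hf Y
    exact congrArg (fun (t : Z ⟶ coyo M A) => t.hom.app Y y) w
  intro e
  let φ : coyo M A ⟶ E := hE.factorThru (evalHom E e) (coyoMap f)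
  refine ⟨φ.hom.app A (𝟙 A), ?_⟩
  have fact : coyoMap (M := M) f ≫ φ = evalHom E e := Injective.comp_factorThru _ _
  have h1 : φ.hom.app B (f ≫ 𝟙 B) = E.obj.map (𝟙 B) e :=
    congrArg (fun (t : coyo M B ⟶ E) => t.hom.app B (𝟙 B)) fact
  rw [Category.comp_id, E.obj.map_id] at h1
  have h2 : φ.hom.app B (𝟙 A ≫ f) = E.obj.map f (φ.hom.app A (𝟙 A)) :=
    congrArg (fun (t : (coyo M A).obj.obj A ⟶ E.obj.obj B) => t (𝟙 A)) (φ.hom.naturality f)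
  rw [Category.id_comp] at h2
  rw [← h2]
  exact h1

/-- If `0 → Hom(C,-) → Hom(B,-) → Hom(A,-)` is exact at `Hom(B,-)` pointwise, then
`E(A) → E(B) → E(C)` is exact for injective `E`. -/
lemma exact (E : AdditiveFunctorCat M) (hE : Injective E) {A B C : M} (f : A ⟶ B) (g : B ⟶ C)
    (hfg : ∀ Y : M, Function.Exact (fun c : C ⟶ Y => g ≫ c) (fun b : B ⟶ Y => f ≫ b)) :
    Function.Exact (E.obj.map f) (E.obj.map g) := by
  have hz : f ≫ g = 0 := (hfg C g).mpr ⟨𝟙 C, Category.comp_id g⟩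
  intro e
  constructor
  · intro he
    haveI : Mono (iot (M := M) f g hz) := by
      constructor
      intro Z α β w
      refine InducedCategory.hom_ext (NatTrans.ext (funext fun Y => AddCommGrpCat.ext fun y => ?_))
      have inj : Function.Injective ((iot (M := M) f g hz).hom.app Y) := by
        rw [injective_iff_map_eq_zero]
        intro x
        induction x using QuotientAddGroup.induction_on with
        | H b =>
          intro hx
          have hb : f ≫ b = 0 := hx
          obtain ⟨c, hc⟩ := (hfg Y b).mp hb
          exact (QuotientAddGroup.eq_zero_iff _).mpr ⟨c, hc⟩
      apply inj
      exact congrArg (fun (t : Z ⟶ coyo M A) => t.hom.app Y y) w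
    let φ : coyo M A ⟶ E := hE.factorThru (psibar E g e he) (iot f g hz)
    refine ⟨φ.hom.app A (𝟙 A), ?_⟩
    have fact : iot (M := M) f g hz ≫ φ = psibar E g e he := Injective.comp_factorThru _ _
    have h1 : φ.hom.app B (f ≫ 𝟙 B) = E.obj.map (𝟙 B) e :=
      congrArg (fun (t : QE (M := M) g ⟶ E) => t.hom.app B (QuotientAddGroup.mk (𝟙 B))) fact
    rw [Category.comp_id, E.obj.map_id] at h1
    have h2 : φ.hom.app B (𝟙 A ≫ f) = E.obj.map f (φ.hom.app A (𝟙 A)) :=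
      congrArg (fun (t : (coyo M A).obj.obj A ⟶ E.obj.obj B) => t (𝟙 A)) (φ.hom.naturality f)
    rw [Category.id_comp] at h2
    rw [← h2]
    exact h1
  · rintro ⟨x, rfl⟩
    show E.obj.map g (E.obj.map f x) = 0
    have hc : E.obj.map f ≫ E.obj.map g = 0 := by
      haveI := E.property
      rw [← E.obj.map_comp, hz, Functor.map_zero]
    exact congrArg (fun (t : E.obj.obj A ⟶ E.obj.obj C) => t x) hc

end NExactAux

/-- If `E` is an injective object in the category of additive group-valued functors on `M`,
then `E` carries every sequence `X⁰ → ⋯ → X^{n+1}` whose associated sequence of representables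
`0 → Hom(X^{n+1},−) → ⋯ → Hom(X⁰,−)` is exact (equivalently, every right `n`-exact sequence)
to an exact sequence `E(X⁰) → ⋯ → E(X^{n+1}) → 0` of abelian groups. -/
theorem injective_functor_is_right_nExact
    (n : ℕ) (E : AdditiveFunctorCat M) (hE : Injective E)
    (X : ℕ → M) (d : ∀ i, X i ⟶ X (i+1))
    -- exactness of `0 → Hom(X^{n+1},−) → ⋯ → Hom(X⁰,−)`, checked pointwise:
    (h : ∀ Y : M, Function.Injective (fun g : X (n+1) ⟶ Y => d n ≫ g) ∧
      ∀ j, j + 1 ≤ n → Function.Exact (fun g : X (j+2) ⟶ Y => d (j+1) ≫ g)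
        (fun g : X (j+1) ⟶ Y => d j ≫ g)) :
    Function.Surjective (E.obj.map (d n)) ∧
      ∀ j, j + 1 ≤ n → Function.Exact (E.obj.map (d j)) (E.obj.map (d (j+1))) := by
  exact ⟨NExactAux.surj E hE (d n) (fun Y => (h Y).1),
    fun j hj => NExactAux.exact E hE (d j) (d (j+1)) (fun Y => (h Y).2 j hj)⟩
end

section
/- Let M be a small n-abelian category and let F' ⊆ F be functors in (M,G) with both F' and F mono functors and F/F' a mono functor, and let F'' ⊆ F' with F'/F'' a mono functor. Then F/F'' is a mono functor; that is, purity of subfunctors is transitive: if F'' is pure in F' and F' is pure in F, then F'' is pure in F. -/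
open CategoryTheory CategoryTheory.Limits

universe u

variable {M : Type u} [SmallCategory M] [Preadditive M]

/-- The `n`-cokernel (right `n`-exactness) condition for an `ℕ`-indexed chain of morphisms:
applying `Hom(−,Y)` yields an exact sequence `0 → Hom(X^{n+1},Y) → ⋯ → Hom(X⁰,Y)`. -/
def IsRightNExact (n : ℕ) (X : ℕ → M) (d : ∀ i, X i ⟶ X (i+1)) : Prop :=
  ∀ Y : M, Function.Injective (fun g : X (n+1) ⟶ Y => d n ≫ g) ∧
    ∀ j, j + 1 ≤ n → Function.Exact (fun g : X (j+2) ⟶ Y => d (j+1) ≫ g)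
      (fun g : X (j+1) ⟶ Y => d j ≫ g)

/-- The `n`-kernel (left `n`-exactness) condition for an `ℕ`-indexed chain of morphisms:
applying `Hom(Y,−)` yields an exact sequence `0 → Hom(Y,X⁰) → ⋯ → Hom(Y,X^{n+1})`. -/
def IsLeftNExact (n : ℕ) (X : ℕ → M) (d : ∀ i, X i ⟶ X (i+1)) : Prop :=
  ∀ Y : M, Function.Injective (fun g : Y ⟶ X 0 => g ≫ d 0) ∧
    ∀ j, j + 1 ≤ n → Function.Exact (fun g : Y ⟶ X j => g ≫ d j)
      (fun g : Y ⟶ X (j+1) => g ≫ d (j+1))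

/-- An `n`-exact sequence: both a left and a right `n`-exact sequence. -/
def IsNExactSeq (n : ℕ) (X : ℕ → M) (d : ∀ i, X i ⟶ X (i+1)) : Prop :=
  IsRightNExact n X d ∧ IsLeftNExact n X d

/-- Jasso's axioms for an `n`-abelian category (with sequences encoded as `ℕ`-indexed
chains; only the indices `0, …, n+1` are relevant). -/
structure IsNAbelian (n : ℕ) (M : Type u) [SmallCategory M] [Preadditive M] : Prop where
  idem : IsIdempotentComplete M
  hasNCokernels : ∀ ⦃A B : M⦄ (f : A ⟶ B), ∃ (X : ℕ → M) (d : ∀ i, X i ⟶ X (i+1))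
    (h0 : X 0 = A) (h1 : X 1 = B), d 0 = eqToHom h0 ≫ f ≫ eqToHom h1.symm ∧
    IsRightNExact n X d
  hasNKernels : ∀ ⦃A B : M⦄ (f : A ⟶ B), ∃ (X : ℕ → M) (d : ∀ i, X i ⟶ X (i+1))
    (h0 : X n = A) (h1 : X (n+1) = B), d n = eqToHom h0 ≫ f ≫ eqToHom h1.symm ∧
    IsLeftNExact n X d
  a2 : ∀ (X : ℕ → M) (d : ∀ i, X i ⟶ X (i+1)), Mono (d 0) → IsRightNExact n X d →
    IsLeftNExact n X d
  a3 : ∀ (X : ℕ → M) (d : ∀ i, X i ⟶ X (i+1)), Epi (d n) → IsLeftNExact n X d →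
    IsRightNExact n X d

/-- A functor `M ⥤ Ab` is a mono functor if it sends monomorphisms of `M` to injective
group homomorphisms. -/
def IsMonoFunctor (F : M ⥤ AddCommGrpCat.{u}) : Prop :=
  ∀ ⦃X Y : M⦄ (f : X ⟶ Y), Mono f → Function.Injective (F.map f)


noncomputable section

set_option linter.unusedSectionVars false in
lemma natElem {A B : M ⥤ AddCommGrpCat.{u}} (φ : A ⟶ B) {X Y : M} (f : X ⟶ Y) (a : A.obj X) :
    φ.app Y (A.map f a) = B.map f (φ.app X a) := by
  have h2 := ConcreteCategory.congr_hom (φ.naturality f) a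
  simp only [AddCommGrpCat.coe_comp, Function.comp_apply] at h2
  exact h2

set_option linter.unusedSectionVars false in
lemma compElem {A B C : M ⥤ AddCommGrpCat.{u}} {φ : A ⟶ B} {ψ : B ⟶ C} (h : φ ≫ ψ = 0)
    (Y : M) (a : A.obj Y) : ψ.app Y (φ.app Y a) = 0 := by
  have h0 := ConcreteCategory.congr_hom (congrArg (fun t => NatTrans.app t Y) h) a
  simpa using h0

set_option linter.unusedSectionVars false in
lemma coker_surj_app {A B : M ⥤ AddCommGrpCat.{u}} (ι : A ⟶ B) (Y : M) :
    Function.Surjective ((cokernel.π ι).app Y) := by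
  have : Epi ((cokernel.π ι).app Y) := inferInstance
  rwa [AddCommGrpCat.epi_iff_surjective] at this

set_option linter.unusedSectionVars false in
lemma coker_exact_app {A B : M ⥤ AddCommGrpCat.{u}} (ι : A ⟶ B) (Y : M)
    {y : B.obj Y} (hy : (cokernel.π ι).app Y y = 0) : ∃ x, ι.app Y x = y := by
  let S := ShortComplex.mk ι (cokernel.π ι) (cokernel.condition ι)
  have hS : S.Exact := S.exact_of_g_is_cokernel (cokernelIsCokernel ι)
  have hS' : (S.map ((evaluation M AddCommGrpCat.{u}).obj Y)).Exact :=
    hS.map_of_epi_of_preservesCokernel _ inferInstance inferInstance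
  rw [ShortComplex.ab_exact_iff] at hS'
  exact hS' y hy

/-- Transitivity of purity: if `F''` is pure in `F'` and `F'` is pure in `F` (all mono
functors over a small `n`-abelian category), then `F''` is pure in `F`; the quotient
`F/F''` (the cokernel of the composite inclusion) is again a mono functor. -/
theorem purity_transitive
    (n : ℕ) (hn : 1 ≤ n) (hM : IsNAbelian n M)
    (F'' F' F : M ⥤ AddCommGrpCat.{u})
    (hF''a : F''.Additive) (hF'a : F'.Additive) (hFa : F.Additive)
    (hF'' : IsMonoFunctor F'') (hF' : IsMonoFunctor F') (hF : IsMonoFunctor F)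
    (ι₁ : F'' ⟶ F') (ι₂ : F' ⟶ F) (hι₁ : Mono ι₁) (hι₂ : Mono ι₂)
    (hpure₁ : IsMonoFunctor (cokernel ι₁)) (hpure₂ : IsMonoFunctor (cokernel ι₂)) :
    IsMonoFunctor (cokernel (ι₁ ≫ ι₂)) := by
  intro X Y f hf
  have hC : ∀ x : (cokernel (ι₁ ≫ ι₂)).obj X,
      (cokernel (ι₁ ≫ ι₂)).map f x = 0 → x = 0 := by
    intro x hx
    obtain ⟨a, ha⟩ := coker_surj_app (ι₁ ≫ ι₂) X x
    have hnat : (cokernel.π (ι₁ ≫ ι₂)).app Y (F.map f a) = 0 := by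
      rw [natElem (cokernel.π (ι₁ ≫ ι₂)) f a, ha, hx]
    obtain ⟨b, hb⟩ := coker_exact_app (ι₁ ≫ ι₂) Y hnat
    have hsplitY : (ι₁ ≫ ι₂).app Y b = ι₂.app Y (ι₁.app Y b) := by simp
    have hq2nat : (cokernel.π ι₂).app Y (F.map f a) = 0 := by
      rw [← hb, hsplitY]
      exact compElem (cokernel.condition ι₂) Y (ι₁.app Y b)
    have hq2a : (cokernel.π ι₂).app X a = 0 := by
      apply hpure₂ f hf
      rw [← natElem (cokernel.π ι₂) f a, hq2nat, map_zero]
    obtain ⟨c, hc⟩ := coker_exact_app ι₂ X hq2a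
    have hι₂inj : Function.Injective (ι₂.app Y) := by
      have : Mono (ι₂.app Y) := inferInstance
      rwa [AddCommGrpCat.mono_iff_injective] at this
    have hFc : F'.map f c = ι₁.app Y b := by
      apply hι₂inj
      rw [natElem ι₂ f c, hc, ← hsplitY, hb]
    have hq1c : (cokernel.π ι₁).app X c = 0 := by
      apply hpure₁ f hf
      rw [← natElem (cokernel.π ι₁) f c, hFc, map_zero]
      exact compElem (cokernel.condition ι₁) Y b
    obtain ⟨d, hd⟩ := coker_exact_app ι₁ X hq1c
    have hsplitX : (ι₁ ≫ ι₂).app X d = ι₂.app X (ι₁.app X d) := by simp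
    rw [← ha, ← hc, ← hd, ← hsplitX]
    exact compElem (cokernel.condition (ι₁ ≫ ι₂)) X d
  intro x y hxy
  have h1 : (cokernel (ι₁ ≫ ι₂)).map f (x - y) = 0 := by rw [map_sub, hxy, sub_self]
  have h2 := hC _ h1
  rwa [sub_eq_zero] at h2

end
end

section
/- Let M be a small n-abelian category and f : X → Y a morphism in M. If the induced natural transformation H^f : Hom(Y,−) → Hom(X,−) is an epimorphism in the abelian category L₂(M,G), then f is a monomorphism in M. -/
open CategoryTheory CategoryTheory.Limits

universe u

variable {M : Type u} [SmallCategory M] [Preadditive M]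

/-- `F` is an absolutely pure functor: whenever `F` appears as a subfunctor of a mono
functor (in the category of additive functors), it is a pure subfunctor, i.e. the
quotient is again a mono functor. -/
def IsAbsolutelyPure (F : M ⥤ AddCommGrpCat.{u}) : Prop :=
  ∀ (G : M ⥤ AddCommGrpCat.{u}), G.Additive → IsMonoFunctor G →
    ∀ ι : F ⟶ G, Mono ι → IsMonoFunctor (cokernel ι)

/-- The defining property of objects of `L₂(M,G)`: additive, mono, and absolutely pure. -/
def L2Prop (F : M ⥤ AddCommGrpCat.{u}) : Prop :=
  F.Additive ∧ IsMonoFunctor F ∧ IsAbsolutelyPure F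

/-- The category `L₂(M,G)` of absolutely pure mono functors. -/
abbrev L2 (M : Type u) [SmallCategory M] [Preadditive M] :=
  ObjectProperty.FullSubcategory (fun F : M ⥤ AddCommGrpCat.{u} => L2Prop F)

/-- If `H^f : Hom(Y,−) ⟶ Hom(X,−)` is an epimorphism in `L₂(M,G)`, then `f : X ⟶ Y` is a
monomorphism in `M`. -/
theorem mono_of_epi_yoneda
    (n : ℕ) (hn : 1 ≤ n) (hM : IsNAbelian n M)
    (hrep : ∀ X : M, L2Prop (preadditiveCoyoneda.obj (Opposite.op X)))
    {X Y : M} (f : X ⟶ Y)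
    (h : Epi (show (⟨preadditiveCoyoneda.obj (Opposite.op Y), hrep Y⟩ : L2 M) ⟶
        (⟨preadditiveCoyoneda.obj (Opposite.op X), hrep X⟩ : L2 M) from
        ObjectProperty.homMk (preadditiveCoyoneda.map f.op))) :
    Mono f := by
  rw [Preadditive.mono_iff_cancel_zero]
  intro Z g hg
  let φ : (⟨preadditiveCoyoneda.obj (Opposite.op X), hrep X⟩ : L2 M) ⟶
      (⟨preadditiveCoyoneda.obj (Opposite.op Z), hrep Z⟩ : L2 M) :=
    ObjectProperty.homMk (preadditiveCoyoneda.map g.op)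
  have hcomp : ObjectProperty.homMk (preadditiveCoyoneda.map f.op) ≫ φ =
      (0 : (⟨preadditiveCoyoneda.obj (Opposite.op Y), hrep Y⟩ : L2 M) ⟶
        (⟨preadditiveCoyoneda.obj (Opposite.op Z), hrep Z⟩ : L2 M)) := by
    apply ObjectProperty.hom_ext
    show preadditiveCoyoneda.map f.op ≫ preadditiveCoyoneda.map g.op = 0
    rw [← Functor.map_comp]
    have : (f.op ≫ g.op) = (g ≫ f).op := rfl
    rw [this, hg]
    ext W (y : Y ⟶ W)
    simp
  have hφ : φ = 0 :=
    h.left_cancellation φ 0 (by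
      rw [Limits.comp_zero]
      exact hcomp)
  have : g = (φ.hom.app X) (𝟙 X) := (Category.comp_id g).symm
  rw [this, hφ]
  rfl
end
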